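/- arXiv:2411.02008 — 5 statements merged into one kernel-verified Lean document; each statement's English description precedes it below -/
import Mathlib

section
/- The Moreau envelope of the maximum function has the closed form: for every λ > 0 and every y ∈ ℝ^n, inf_{x ∈ ℝ^n} ( max_{1≤i≤n} x_i + λ‖x − y‖² ) = λ‖y‖² − dist(2λy, Δ_n)²/(4λ), where dist(2λy, Δ_n) = inf_{p ∈ Δ_n} ‖2λy − p‖ is the Euclidean distance from 2λy to the unit simplex. -/
open scoped BigOperators
open RealInnerProductSpace Metric

/-- The unit simplex `Δ_n` in Euclidean space `ℝ^n`. -/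
def unitSimplex (n : ℕ) : Set (EuclideanSpace ℝ (Fin n)) :=
  {x | (∀ i, 0 ≤ x i) ∧ ∑ i, x i = 1}

lemma unitSimplex_eq_image (n : ℕ) :
    unitSimplex n = (EuclideanSpace.equiv (Fin n) ℝ).symm '' stdSimplex ℝ (Fin n) := by
  ext x
  constructor
  · rintro ⟨h1, h2⟩
    exact ⟨x, ⟨h1, h2⟩, rfl⟩
  · rintro ⟨w, ⟨h1, h2⟩, rfl⟩
    exact ⟨h1, h2⟩

lemma isCompact_unitSimplex (n : ℕ) : IsCompact (unitSimplex n) := by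
  rw [unitSimplex_eq_image]
  exact (isCompact_stdSimplex ℝ (Fin n)).image
    (EuclideanSpace.equiv (Fin n) ℝ).symm.continuous

lemma convex_unitSimplex (n : ℕ) : Convex ℝ (unitSimplex n) := by
  rw [unitSimplex_eq_image]
  exact (convex_stdSimplex ℝ (Fin n)).linear_image
    ((EuclideanSpace.equiv (Fin n) ℝ).symm.toLinearEquiv.toLinearMap)

lemma single_mem_unitSimplex {n : ℕ} (i : Fin n) :
    EuclideanSpace.single i (1:ℝ) ∈ unitSimplex n := by
  constructor
  · intro j
    rw [EuclideanSpace.single_apply]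
    split <;> norm_num
  · simp [EuclideanSpace.single_apply]

/-- For `p` in the simplex, `⟪p, x⟫ ≤ ⨆ i, x i`. -/
lemma inner_le_iSup {n : ℕ} (hn : 0 < n) {p : EuclideanSpace ℝ (Fin n)}
    (hp : p ∈ unitSimplex n) (x : EuclideanSpace ℝ (Fin n)) :
    ⟪p, x⟫ ≤ ⨆ i, x i := by
  have : Nonempty (Fin n) := ⟨⟨0, hn⟩⟩
  have hbdd : BddAbove (Set.range fun i => x i) := Set.Finite.bddAbove (Set.finite_range _)
  calc ⟪p, x⟫ = ∑ i, p i * x i := by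
        simp [PiLp.inner_apply, RCLike.inner_apply, conj_trivial]
        exact Finset.sum_congr rfl fun i _ => mul_comm _ _
    _ ≤ ∑ i, p i * (⨆ j, x j) := by
        refine Finset.sum_le_sum fun i _ => ?_
        exact mul_le_mul_of_nonneg_left (le_ciSup hbdd i) (hp.1 i)
    _ = ⨆ j, x j := by rw [← Finset.sum_mul, hp.2, one_mul]

/-- Closed form of the Moreau envelope of the maximum function:
`inf_x ( max_i x_i + λ‖x − y‖² ) = λ‖y‖² − dist(2λy, Δ_n)²/(4λ)`. -/
theorem stmt3 {n : ℕ} (hn : 0 < n) (lam : ℝ) (hlam : 0 < lam)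
    (y : EuclideanSpace ℝ (Fin n)) :
    (⨅ x : EuclideanSpace ℝ (Fin n), ((⨆ i, x i) + lam * ‖x - y‖ ^ 2)) =
      lam * ‖y‖ ^ 2 - (Metric.infDist ((2 * lam) • y) (unitSimplex n)) ^ 2 / (4 * lam) := by
  have : Nonempty (Fin n) := ⟨⟨0, hn⟩⟩
  set z : EuclideanSpace ℝ (Fin n) := (2 * lam) • y with hz
  have hne : (unitSimplex n).Nonempty := ⟨_, single_mem_unitSimplex ⟨0, hn⟩⟩
  obtain ⟨p, hpΔ, hpd⟩ := (isCompact_unitSimplex n).exists_infDist_eq_dist hne z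
  -- projection characterization
  have hchar : ∀ q ∈ unitSimplex n, ⟪z - p, q - p⟫ ≤ 0 := by
    rw [← norm_eq_iInf_iff_real_inner_le_zero (convex_unitSimplex n) hpΔ]
    have h : (⨅ w : unitSimplex n, ‖z - (w : EuclideanSpace ℝ (Fin n))‖)
        = infDist z (unitSimplex n) := by
      rw [infDist_eq_iInf]
      simp_rw [dist_eq_norm]
    rw [h, hpd, dist_eq_norm]
  have hlam' : (2 * lam) ≠ 0 := by positivity
  -- the candidate minimizer
  set x₀ : EuclideanSpace ℝ (Fin n) := y - (1 / (2 * lam)) • p with hx₀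
  have hzx₀ : z - p = (2 * lam) • x₀ := by
    rw [hx₀, smul_sub, smul_smul, mul_one_div, div_self hlam', one_smul, hz]
  -- rewrite the target value
  have htarget : lam * ‖y‖ ^ 2 - ‖z - p‖ ^ 2 / (4 * lam) = ⟪p, y⟫ - ‖p‖ ^ 2 / (4 * lam) := by
    have h1 : ‖z - p‖ ^ 2 = ‖z‖ ^ 2 - 2 * ⟪z, p⟫ + ‖p‖ ^ 2 := norm_sub_sq_real z p
    have h2 : ‖z‖ = (2 * lam) * ‖y‖ := by
      rw [hz, norm_smul, Real.norm_eq_abs, abs_of_pos (by positivity)]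
    have h3 : ⟪z, p⟫ = (2 * lam) * ⟪p, y⟫ := by
      rw [hz, real_inner_smul_left, real_inner_comm]
    rw [h1, h2, h3]
    field_simp
    ring
  -- key lower bound for every x
  have hlb : ∀ x : EuclideanSpace ℝ (Fin n),
      lam * ‖y‖ ^ 2 - ‖z - p‖ ^ 2 / (4 * lam) ≤ (⨆ i, x i) + lam * ‖x - y‖ ^ 2 := by
    intro x
    rw [htarget]
    have h1 : ⟪p, x⟫ ≤ ⨆ i, x i := inner_le_iSup hn hpΔ x
    have h2 : (0:ℝ) ≤ lam * ‖(x - y) + (1 / (2 * lam)) • p‖ ^ 2 := by positivity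
    have h3 : ‖(x - y) + (1 / (2 * lam)) • p‖ ^ 2
        = ‖x - y‖ ^ 2 + 2 * ((1 / (2 * lam)) * ⟪x - y, p⟫) + (1 / (2 * lam)) ^ 2 * ‖p‖ ^ 2 := by
      rw [norm_add_sq_real, real_inner_smul_right, norm_smul, Real.norm_eq_abs,
        abs_of_pos (by positivity), mul_pow]
    have h4 : ⟪p, x⟫ = ⟪x - y, p⟫ + ⟪p, y⟫ := by
      rw [inner_sub_left, real_inner_comm p x, real_inner_comm p y]
      ring
    rw [h3] at h2
    have h5 : lam * (‖x - y‖ ^ 2 + 2 * ((1 / (2 * lam)) * ⟪x - y, p⟫)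
        + (1 / (2 * lam)) ^ 2 * ‖p‖ ^ 2)
        = lam * ‖x - y‖ ^ 2 + ⟪x - y, p⟫ + ‖p‖ ^ 2 / (4 * lam) := by
      field_simp
      ring
    rw [h5] at h2
    linarith
  -- value at the candidate minimizer
  have hub : (⨆ i, x₀ i) + lam * ‖x₀ - y‖ ^ 2 = lam * ‖y‖ ^ 2 - ‖z - p‖ ^ 2 / (4 * lam) := by
    have hsup : (⨆ i, x₀ i) = ⟪p, x₀⟫ := by
      refine le_antisymm ?_ (inner_le_iSup hn hpΔ x₀)
      refine ciSup_le fun i => ?_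
      have hq := hchar _ (single_mem_unitSimplex i)
      rw [hzx₀, real_inner_smul_left] at hq
      have h5 : ⟪x₀, EuclideanSpace.single i (1:ℝ) - p⟫ ≤ 0 := by
        nlinarith [hq]
      rw [inner_sub_right] at h5
      have h6 : ⟪x₀, EuclideanSpace.single i (1:ℝ)⟫ = x₀ i := by
        rw [EuclideanSpace.inner_single_right]
        simp
      rw [h6] at h5
      rw [real_inner_comm]
      linarith
    have h7 : x₀ - y = -((1 / (2 * lam)) • p) := by
      rw [hx₀]; abel
    have h8 : ‖x₀ - y‖ ^ 2 = (1 / (2 * lam)) ^ 2 * ‖p‖ ^ 2 := by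
      rw [h7, norm_neg, norm_smul, Real.norm_eq_abs, abs_of_pos (by positivity), mul_pow]
    have h9 : ⟪p, x₀⟫ = ⟪p, y⟫ - (1 / (2 * lam)) * ‖p‖ ^ 2 := by
      rw [hx₀, inner_sub_right, real_inner_smul_right, real_inner_self_eq_norm_sq]
    rw [hsup, h8, h9, htarget]
    field_simp
    ring
  rw [hpd, dist_eq_norm]
  refine le_antisymm ?_ (le_ciInf hlb)
  calc (⨅ x : EuclideanSpace ℝ (Fin n), ((⨆ i, x i) + lam * ‖x - y‖ ^ 2))
      ≤ (⨆ i, x₀ i) + lam * ‖x₀ - y‖ ^ 2 := ciInf_le ⟨_, Set.forall_mem_range.mpr hlb⟩ x₀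
    _ = _ := hub
end

section
/- Uniform error bound for the compensated convexity upper transform of the maximum function: for every λ > 0 and every y ∈ ℝ^n, −1/(4λ) ≤ M(y) − C_λ(y) ≤ 0; equivalently C_λ(y) − 1/(4λ) ≤ max_{1≤i≤n} y_i ≤ C_λ(y). -/
open scoped BigOperators

/-- The compensated-convexity upper transform of the maximum function:
`C_λ(y) = λ‖y‖² − dist(2λy, Δ_n)²/(4λ) + 1/(4λ)`. -/
noncomputable def Cupper {n : ℕ} (lam : ℝ) (y : EuclideanSpace ℝ (Fin n)) : ℝ :=
  lam * ‖y‖ ^ 2 - (Metric.infDist ((2 * lam) • y) (unitSimplex n)) ^ 2 / (4 * lam) + 1 / (4 * lam)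

/-- Uniform error bound: `−1/(4λ) ≤ M(y) − C_λ(y) ≤ 0` for every `λ > 0` and `y ∈ ℝ^n`,
where `M(y) = max_i y_i`. -/
theorem stmt4 {n : ℕ} (hn : 0 < n) (lam : ℝ) (hlam : 0 < lam)
    (y : EuclideanSpace ℝ (Fin n)) :
    -(1 / (4 * lam)) ≤ (⨆ i, y i) - Cupper lam y ∧ (⨆ i, y i) - Cupper lam y ≤ 0 := by
  haveI : Nonempty (Fin n) := Fin.pos_iff_nonempty.mp hn
  obtain ⟨j, hj⟩ := Finite.exists_max y
  have hM : (⨆ i, y i) = y j :=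
    le_antisymm (ciSup_le hj) (le_ciSup (Finite.bddAbove_range y) j)
  set ej : EuclideanSpace ℝ (Fin n) := EuclideanSpace.single j (1:ℝ) with hej
  have hejmem : ej ∈ unitSimplex n := by
    constructor
    · intro i
      simp only [hej, EuclideanSpace.single_apply]
      split_ifs <;> norm_num
    · simp [hej, EuclideanSpace.single_apply]
  have hne : (unitSimplex n).Nonempty := ⟨ej, hejmem⟩
  have hdist : ∀ x : EuclideanSpace ℝ (Fin n), dist ((2*lam) • y) x ^ 2
      = 4*lam^2*‖y‖^2 - 4*lam*(∑ i, y i * x i) + ‖x‖^2 := by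
    intro x
    rw [dist_eq_norm, norm_sub_sq_real]
    have h1 : ‖(2*lam) • y‖^2 = 4*lam^2*‖y‖^2 := by
      rw [norm_smul, mul_pow, Real.norm_eq_abs, sq_abs]
      ring
    have h2 : inner ℝ ((2*lam) • y) x = 2*lam*∑ i, y i * x i := by
      rw [real_inner_smul_left, PiLp.inner_apply]
      simp [RCLike.inner_apply, Finset.mul_sum, mul_comm]
    rw [h1, h2]
    ring
  set d : ℝ := Metric.infDist ((2 * lam) • y) (unitSimplex n) with hd
  have hd0 : 0 ≤ d := Metric.infDist_nonneg
  set c : ℝ := 4*lam^2*‖y‖^2 - 4*lam*(y j) with hc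
  -- upper bound on d^2
  have hdistej : dist ((2*lam) • y) ej ^ 2 = c + 1 := by
    rw [hdist ej]
    have hs : (∑ i, y i * ej i) = y j := by
      simp [hej, EuclideanSpace.single_apply]
    have hn : ‖ej‖ = 1 := by
      simp [hej, EuclideanSpace.norm_single]
    rw [hs, hn]
    ring
  have hup : d ^ 2 ≤ c + 1 := by
    rw [← hdistej]
    exact pow_le_pow_left₀ hd0 (Metric.infDist_le_dist_of_mem hejmem) 2
  -- lower bound on d^2
  have hxb : ∀ x ∈ unitSimplex n, c ≤ dist ((2*lam) • y) x ^ 2 := by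
    intro x hx
    rw [hdist x]
    have hsum : (∑ i, y i * x i) ≤ y j := by
      calc (∑ i, y i * x i) ≤ ∑ i, y j * x i := by
            apply Finset.sum_le_sum
            intro i _
            exact mul_le_mul_of_nonneg_right (hj i) (hx.1 i)
        _ = y j := by rw [← Finset.mul_sum, hx.2, mul_one]
    nlinarith [sq_nonneg ‖x‖]
  have hlow : c ≤ d ^ 2 := by
    rcases le_or_gt c 0 with h | h
    · exact h.trans (sq_nonneg d)
    · have hs : Real.sqrt c ≤ d := by
        by_contra hlt
        push_neg at hlt
        obtain ⟨x, hx, hxd⟩ := (Metric.infDist_lt_iff hne).1 hlt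
        have h1 := hxb x hx
        have h2 : (0:ℝ) ≤ dist ((2*lam) • y) x := dist_nonneg
        nlinarith [Real.sq_sqrt h.le, Real.sqrt_nonneg c]
      calc c = Real.sqrt c ^ 2 := (Real.sq_sqrt h.le).symm
        _ ≤ d ^ 2 := pow_le_pow_left₀ (Real.sqrt_nonneg c) hs 2
  rw [hM]
  unfold Cupper
  rw [← hd]
  have h4 : (0:ℝ) < 4 * lam := by linarith
  have e1 : c / (4*lam) ≤ d^2 / (4*lam) := by gcongr
  have e2 : d^2 / (4*lam) ≤ (c+1) / (4*lam) := by gcongr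
  have hcdiv : c / (4*lam) = lam * ‖y‖^2 - y j := by
    rw [hc]; field_simp
  have hsplit : (c+1) / (4*lam) = c / (4*lam) + 1 / (4*lam) := by ring
  constructor
  · linarith
  · linarith
end

section
/- For every λ > 0, the compensated-convexity upper transform C_λ of the maximum function is differentiable on ℝ^n, and its gradient at y equals the unique nearest point in Δ_n to 2λy: ∇C_λ(y) = p(2λy), where p(2λy) ∈ Δ_n is the unique point satisfying ‖2λy − p(2λy)‖ = dist(2λy, Δ_n). -/
open scoped BigOperators
open Metric
open scoped RealInnerProductSpace

section aux

variable {n : ℕ}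

lemma unitSimplex_convex : Convex ℝ (unitSimplex n) :=
  (convex_stdSimplex ℝ (Fin n)).linear_preimage (WithLp.linearEquiv 2 ℝ (Fin n → ℝ)).toLinearMap

lemma unitSimplex_isClosed : IsClosed (unitSimplex n) :=
  (isClosed_stdSimplex ℝ (Fin n)).preimage (PiLp.continuous_ofLp 2 _)

lemma unitSimplex_nonempty (hn : 0 < n) : (unitSimplex n).Nonempty :=
  ⟨(EuclideanSpace.equiv (Fin n) ℝ).symm (fun j => if (⟨0, hn⟩ : Fin n) = j then 1 else 0),
    ite_eq_mem_stdSimplex ℝ _⟩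

lemma unitSimplex_infDist_eq (x : EuclideanSpace ℝ (Fin n)) (hn : 0 < n) :
    infDist x (unitSimplex n) = ⨅ w : unitSimplex n, ‖x - w‖ := by
  rw [Metric.infDist_eq_iInf]
  simp only [dist_eq_norm]

lemma near_iff (hn : 0 < n) (x p : EuclideanSpace ℝ (Fin n)) (hp : p ∈ unitSimplex n) :
    ‖x - p‖ = infDist x (unitSimplex n) ↔
      ∀ w ∈ unitSimplex n, ⟪x - p, w - p⟫ ≤ 0 := by
  rw [unitSimplex_infDist_eq x hn]
  exact norm_eq_iInf_iff_real_inner_le_zero unitSimplex_convex hp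

lemma exists_near (hn : 0 < n) (x : EuclideanSpace ℝ (Fin n)) :
    ∃ p ∈ unitSimplex n, ‖x - p‖ = infDist x (unitSimplex n) := by
  obtain ⟨p, hp, h⟩ := exists_norm_eq_iInf_of_complete_convex (unitSimplex_nonempty hn)
    unitSimplex_isClosed.isComplete unitSimplex_convex x
  exact ⟨p, hp, by rw [unitSimplex_infDist_eq x hn]; exact h⟩

lemma proj_lipschitz (hn : 0 < n) {x x' p p' : EuclideanSpace ℝ (Fin n)}
    (hp : p ∈ unitSimplex n) (hp' : p' ∈ unitSimplex n)
    (hx : ‖x - p‖ = infDist x (unitSimplex n))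
    (hx' : ‖x' - p'‖ = infDist x' (unitSimplex n)) :
    ‖p - p'‖ ≤ ‖x - x'‖ := by
  have h1 : ⟪x - p, p' - p⟫ ≤ 0 := (near_iff hn x p hp).1 hx p' hp'
  have h2 : ⟪x' - p', p - p'⟫ ≤ 0 := (near_iff hn x' p' hp').1 hx' p hp
  have key : ‖p - p'‖ ^ 2 ≤ ⟪x - x', p - p'⟫ := by
    have e1 : ⟪x - p, p - p'⟫ = -⟪x - p, p' - p⟫ := by
      rw [← inner_neg_right, neg_sub]
    have e2 : ⟪x - x', p - p'⟫
        = ⟪x - p, p - p'⟫ + ⟪p - p', p - p'⟫ - ⟪x' - p', p - p'⟫ := by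
      rw [← inner_add_left, ← inner_sub_left]
      congr 1
      abel
    have e3 : ⟪p - p', p - p'⟫ = ‖p - p'‖ ^ 2 := real_inner_self_eq_norm_sq _
    linarith [e1, e2, e3, h1, h2]
  have hcs : ⟪x - x', p - p'⟫ ≤ ‖x - x'‖ * ‖p - p'‖ := real_inner_le_norm _ _
  rcases eq_or_lt_of_le (norm_nonneg (p - p')) with h0 | h0
  · rw [← h0]; exact norm_nonneg _
  · nlinarith [key, hcs]

lemma sq_infDist_est (hn : 0 < n) (x x' p : EuclideanSpace ℝ (Fin n))
    (hp : p ∈ unitSimplex n) (hx : ‖x - p‖ = infDist x (unitSimplex n)) :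
    |infDist x' (unitSimplex n) ^ 2 - infDist x (unitSimplex n) ^ 2
      - 2 * ⟪x - p, x' - x⟫| ≤ 3 * ‖x' - x‖ ^ 2 := by
  obtain ⟨p', hp', hx'⟩ := exists_near hn x'
  set d := infDist x (unitSimplex n) with hd
  set d' := infDist x' (unitSimplex n) with hd'
  have hd0 : 0 ≤ d := infDist_nonneg
  have hd'0 : 0 ≤ d' := infDist_nonneg
  -- upper bound
  have hup : d' ^ 2 ≤ d ^ 2 + 2 * ⟪x - p, x' - x⟫ + ‖x' - x‖ ^ 2 := by
    have h1 : d' ≤ ‖x' - p‖ := by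
      rw [← dist_eq_norm]; exact infDist_le_dist_of_mem hp
    have h2 : d' ^ 2 ≤ ‖x' - p‖ ^ 2 := by nlinarith [norm_nonneg (x' - p)]
    have h3 : x' - p = (x - p) + (x' - x) := by abel
    have h4 : ‖x' - p‖ ^ 2 = ‖x - p‖ ^ 2 + 2 * ⟪x - p, x' - x⟫ + ‖x' - x‖ ^ 2 := by
      rw [h3]; exact norm_add_sq_real _ _
    rw [hx] at h4
    linarith
  -- lower bound
  have hlow : d ^ 2 + 2 * ⟪x - p, x' - x⟫ - 3 * ‖x' - x‖ ^ 2 ≤ d' ^ 2 := by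
    have h1 : d ≤ ‖x - p'‖ := by
      rw [← dist_eq_norm]; exact infDist_le_dist_of_mem hp'
    have h2 : d ^ 2 ≤ ‖x - p'‖ ^ 2 := by nlinarith [norm_nonneg (x - p')]
    have h3 : x - p' = (x' - p') + (x - x') := by abel
    have h4 : ‖x - p'‖ ^ 2 = ‖x' - p'‖ ^ 2 + 2 * ⟪x' - p', x - x'⟫ + ‖x - x'‖ ^ 2 := by
      rw [h3]; exact norm_add_sq_real _ _
    rw [hx'] at h4
    -- ⟪x' - p', x - x'⟫ = -⟪x' - p', x' - x⟫
    have h5 : ⟪x' - p', x - x'⟫ = -⟪x' - p', x' - x⟫ := by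
      rw [← inner_neg_right]; congr 1; abel
    -- x' - p' = (x - p) + (x' - x) + (p - p')
    have h6 : ⟪x' - p', x' - x⟫
        = ⟪x - p, x' - x⟫ + ⟪x' - x, x' - x⟫ + ⟪p - p', x' - x⟫ := by
      rw [← inner_add_left, ← inner_add_left]; congr 1; abel
    have h7 : ⟪x' - x, x' - x⟫ = ‖x' - x‖ ^ 2 := real_inner_self_eq_norm_sq _
    have h8 : |⟪p - p', x' - x⟫| ≤ ‖x' - x‖ ^ 2 := by
      have := abs_real_inner_le_norm (p - p') (x' - x)
      have hlip : ‖p - p'‖ ≤ ‖x - x'‖ := proj_lipschitz hn hp hp' hx hx'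
      have hxx : ‖x - x'‖ = ‖x' - x‖ := norm_sub_rev _ _
      nlinarith [norm_nonneg (x' - x)]
    have hnn : ‖x - x'‖ = ‖x' - x‖ := norm_sub_rev _ _
    have hnn2 : ‖x - x'‖ ^ 2 = ‖x' - x‖ ^ 2 := by rw [hnn]
    have h8' : -(‖x' - x‖ ^ 2) ≤ ⟪p - p', x' - x⟫ := neg_le_of_abs_le h8
    linarith [h2, h4, h5, h6, h7, hnn2, h8']
  rw [abs_le]
  constructor <;> linarith

end aux

/-- `C_λ` is differentiable on `ℝ^n` with `∇C_λ(y) = p(2λy)`, the unique nearest point of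
the unit simplex `Δ_n` to `2λy`. -/
theorem stmt6 {n : ℕ} (hn : 0 < n) (lam : ℝ) (hlam : 0 < lam)
    (y : EuclideanSpace ℝ (Fin n)) :
    (∃! p, p ∈ unitSimplex n ∧
        ‖(2 * lam) • y - p‖ = Metric.infDist ((2 * lam) • y) (unitSimplex n)) ∧
    (∀ p, p ∈ unitSimplex n →
        ‖(2 * lam) • y - p‖ = Metric.infDist ((2 * lam) • y) (unitSimplex n) →
        HasGradientAt (Cupper lam) p y) := by
  set x := (2 * lam) • y with hxdef
  constructor
  · -- existence and uniqueness of the nearest point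
    obtain ⟨p, hp, hnear⟩ := exists_near hn x
    refine ⟨p, ⟨hp, hnear⟩, ?_⟩
    rintro q ⟨hq, hqnear⟩
    have h1 : ⟪x - p, q - p⟫ ≤ 0 := (near_iff hn x p hp).1 hnear q hq
    have h2 : ⟪x - q, p - q⟫ ≤ 0 := (near_iff hn x q hq).1 hqnear p hp
    have e' : (x - p) - (x - q) = q - p := by abel
    have e : ⟪q - p, q - p⟫ = ⟪x - p, q - p⟫ - ⟪x - q, q - p⟫ := by
      rw [← inner_sub_left, e']
    have e2 : ⟪x - q, q - p⟫ = -⟪x - q, p - q⟫ := by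
      rw [← inner_neg_right, neg_sub]
    have hsq : ‖q - p‖ ^ 2 ≤ 0 := by
      rw [← real_inner_self_eq_norm_sq, e, e2]; linarith
    have : q - p = 0 := by
      have := norm_nonneg (q - p)
      have hz : ‖q - p‖ = 0 := by nlinarith
      exact norm_eq_zero.mp hz
    exact sub_eq_zero.mp this
  · -- gradient
    intro p hp hnear
    rw [hasGradientAt_iff_isLittleO]
    have bound : ∀ y' : EuclideanSpace ℝ (Fin n),
        |Cupper lam y' - Cupper lam y - ⟪p, y' - y⟫| ≤ 4 * lam * ‖y' - y‖ ^ 2 := by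
      intro y'
      set x' := (2 * lam) • y' with hx'def
      have hest := sq_infDist_est hn x x' p hp hnear
      have hxx' : x' - x = (2 * lam) • (y' - y) := by rw [hxdef, hx'def, smul_sub]
      have hnxx : ‖x' - x‖ ^ 2 = (2 * lam) ^ 2 * ‖y' - y‖ ^ 2 := by
        rw [hxx', norm_smul, mul_pow]
        congr 2
        rw [Real.norm_eq_abs, abs_of_pos (by positivity)]
      have hinner : ⟪x - p, x' - x⟫
          = (2 * lam) * ((2 * lam) * ⟪y, y' - y⟫ - ⟪p, y' - y⟫) := by
        rw [hxx', hxdef, real_inner_smul_right, inner_sub_left, real_inner_smul_left]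
      have hnorm : ‖y'‖ ^ 2 = ‖y‖ ^ 2 + 2 * ⟪y, y' - y⟫ + ‖y' - y‖ ^ 2 := by
        have h := norm_add_sq_real y (y' - y)
        simpa using h
      have hl0 : lam ≠ 0 := ne_of_gt hlam
      set E := infDist x' (unitSimplex n) ^ 2 - infDist x (unitSimplex n) ^ 2
          - 2 * ⟪x - p, x' - x⟫ with hE
      have key : Cupper lam y' - Cupper lam y - ⟪p, y' - y⟫
          = lam * ‖y' - y‖ ^ 2 - E / (4 * lam) := by
        rw [hE, hinner]
        simp only [Cupper, ← hxdef, ← hx'def, hnorm]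
        field_simp
        ring
      rw [key]
      have hlam4 : (0:ℝ) < 4 * lam := by linarith
      have h1 : |E / (4 * lam)| ≤ 3 * lam * ‖y' - y‖ ^ 2 := by
        rw [abs_div, abs_of_pos hlam4, div_le_iff₀ hlam4]
        calc |E| ≤ 3 * ‖x' - x‖ ^ 2 := hest
          _ = 3 * lam * ‖y' - y‖ ^ 2 * (4 * lam) := by rw [hnxx]; ring
      have h1' := abs_le.mp h1
      have hpos : 0 ≤ lam * ‖y' - y‖ ^ 2 := by positivity
      rw [abs_le]
      constructor <;> linarith [h1'.1, h1'.2]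
    rw [Asymptotics.isLittleO_iff]
    intro c hc
    rw [Metric.eventually_nhds_iff]
    refine ⟨c / (4 * lam), by positivity, ?_⟩
    intro y' hy'
    rw [dist_eq_norm] at hy'
    have hlam4 : (0:ℝ) < 4 * lam := by linarith
    rw [lt_div_iff₀ hlam4] at hy'
    have hb := bound y'
    rw [Real.norm_eq_abs]
    calc |Cupper lam y' - Cupper lam y - ⟪p, y' - y⟫|
        ≤ 4 * lam * ‖y' - y‖ ^ 2 := hb
      _ ≤ c * ‖y' - y‖ := by nlinarith [norm_nonneg (y' - y), hy', hlam4]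
end

section
/- C_λ is nondecreasing for the coordinatewise order: for every λ > 0 and all y, y' ∈ ℝ^n with y_i ≤ y'_i for every i, one has C_λ(y) ≤ C_λ(y'). -/
open scoped BigOperators

lemma simplex_nonempty {n : ℕ} (hn : 0 < n) : (unitSimplex n).Nonempty := by
  refine ⟨EuclideanSpace.single ⟨0, hn⟩ (1 : ℝ), ?_, ?_⟩
  · intro i
    by_cases h : i = ⟨0, hn⟩ <;> simp [EuclideanSpace.single_apply, h]
  · simp [EuclideanSpace.single_apply]

lemma simplex_compact {n : ℕ} : IsCompact (unitSimplex n) := by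
  apply Metric.isCompact_of_isClosed_isBounded
  · have : unitSimplex n =
        (⋂ i, {x : EuclideanSpace ℝ (Fin n) | 0 ≤ x i}) ∩
          {x : EuclideanSpace ℝ (Fin n) | ∑ i, x i = 1} := by
      ext x; simp [unitSimplex, Set.mem_iInter]
    rw [this]
    refine IsClosed.inter (isClosed_iInter fun i => ?_) ?_
    · exact isClosed_le continuous_const (PiLp.continuous_apply 2 _ i)
    · exact isClosed_eq (continuous_finset_sum _ fun i _ => PiLp.continuous_apply 2 _ i)
        continuous_const
  · rw [Metric.isBounded_iff_subset_closedBall 0]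
    refine ⟨1, fun x hx => ?_⟩
    obtain ⟨hpos, hsum⟩ := hx
    have hle1 : ∀ i, x i ≤ 1 := by
      intro i
      calc x i ≤ ∑ j, x j := Finset.single_le_sum (fun j _ => hpos j) (Finset.mem_univ i)
        _ = 1 := hsum
    have hnorm : ‖x‖ ^ 2 ≤ 1 := by
      rw [EuclideanSpace.norm_eq, Real.sq_sqrt (by positivity)]
      simp only [Real.norm_eq_abs, sq_abs]
      calc ∑ i, x i ^ 2 ≤ ∑ i, x i := by
            refine Finset.sum_le_sum fun i _ => ?_
            nlinarith [hpos i, hle1 i]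
        _ = 1 := hsum
    simp only [Metric.mem_closedBall, dist_zero_right]
    nlinarith [norm_nonneg x]

lemma key {n : ℕ} (lam : ℝ) (hlam : 0 < lam) (y x : EuclideanSpace ℝ (Fin n)) :
    lam * ‖y‖ ^ 2 - ‖(2 * lam) • y - x‖ ^ 2 / (4 * lam)
      = inner ℝ y x - ‖x‖ ^ 2 / (4 * lam) := by
  have h1 : ‖(2 * lam) • y - x‖ ^ 2
      = ‖(2 * lam) • y‖ ^ 2 - 2 * inner ℝ ((2 * lam) • y) x + ‖x‖ ^ 2 :=
    @norm_sub_sq_real (EuclideanSpace ℝ (Fin n)) _ _ _ _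
  have h2 : ‖(2 * lam) • y‖ ^ 2 = (2 * lam) ^ 2 * ‖y‖ ^ 2 := by
    rw [norm_smul, mul_pow]
    congr 1
    rw [Real.norm_eq_abs, sq_abs]
  have h3 : (inner ℝ ((2 * lam) • y) x : ℝ) = (2 * lam) * inner ℝ y x :=
    real_inner_smul_left y x (2 * lam)
  rw [h1, h2, h3]
  field_simp
  ring

/-- `C_λ` is nondecreasing for the coordinatewise order. -/
theorem stmt8 {n : ℕ} (hn : 0 < n) (lam : ℝ) (hlam : 0 < lam)
    (y y' : EuclideanSpace ℝ (Fin n)) (hle : ∀ i, y i ≤ y' i) :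
    Cupper lam y ≤ Cupper lam y' := by
  obtain ⟨x, hx, hdist⟩ :=
    (simplex_compact (n := n)).exists_infDist_eq_dist (simplex_nonempty hn) ((2 * lam) • y)
  have hCy : Cupper lam y = inner ℝ y x - ‖x‖ ^ 2 / (4 * lam) + 1 / (4 * lam) := by
    rw [Cupper, hdist, dist_eq_norm, key lam hlam y x]
  have hinf : Metric.infDist ((2 * lam) • y') (unitSimplex n) ≤ ‖(2 * lam) • y' - x‖ := by
    rw [← dist_eq_norm]; exact Metric.infDist_le_dist_of_mem hx
  have hinfsq : Metric.infDist ((2 * lam) • y') (unitSimplex n) ^ 2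
      ≤ ‖(2 * lam) • y' - x‖ ^ 2 := by
    have h0 := Metric.infDist_nonneg (x := (2 * lam) • y') (s := unitSimplex n)
    nlinarith
  have hCy' : inner ℝ y' x - ‖x‖ ^ 2 / (4 * lam) + 1 / (4 * lam) ≤ Cupper lam y' := by
    rw [Cupper, ← key lam hlam y' x]
    have h := (div_le_div_iff_of_pos_right (show (0:ℝ) < 4 * lam by positivity)).mpr hinfsq
    linarith
  have hinner : (inner ℝ y x : ℝ) ≤ inner ℝ y' x := by
    rw [PiLp.inner_apply, PiLp.inner_apply]
    exact Finset.sum_le_sum fun i _ => by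
      have := hx.1 i
      have := hle i
      simp only [RCLike.inner_apply, conj_trivial]
      nlinarith
  rw [hCy]
  refine le_trans ?_ hCy'
  linarith
end

section
/- Equivalence of the constrained min–max problem with the root-finding problem: suppose the feasible set S = {Ω ∈ ℝ^N : g_q(Ω) ≤ σ_q for all q = 1,…,Q} is nonempty, and let t* = inf_{Ω ∈ S} max_{1≤k≤K} f_k(Ω) (a real number, since the f_k are bounded). Then F(t*) = 0. -/
open scoped BigOperators

/-- `f_k(Ω) = −(1/α)·|∑_n h_n e^{iΩ_n}|²`. -/
noncomputable def fObj {N : ℕ} (α : ℝ) (h : Fin N → ℂ) (Ω : Fin N → ℝ) : ℝ :=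
  -(1 / α) * ‖∑ n, h n * Complex.exp (Complex.I * (Ω n : ℂ))‖ ^ 2

/-- `g_q(Ω) = |∑_n c_n e^{iΩ_n}|²`. -/
noncomputable def gObj {N : ℕ} (c : Fin N → ℂ) (Ω : Fin N → ℝ) : ℝ :=
  ‖∑ n, c n * Complex.exp (Complex.I * (Ω n : ℂ))‖ ^ 2

lemma ciSup_attained {ι : Type*} [Finite ι] [Nonempty ι] (f : ι → ℝ) :
    ∃ i, (⨆ j, f j) = f i := by
  obtain ⟨i, hi⟩ := Finite.exists_max f
  exact ⟨i, le_antisymm (ciSup_le hi) (le_ciSup (Set.finite_range f).bddAbove i)⟩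

lemma fObj_lower {N : ℕ} (α : ℝ) (hα : 0 < α) (h : Fin N → ℂ) (Ω : Fin N → ℝ) :
    -(1 / α) * (∑ n, ‖h n‖) ^ 2 ≤ fObj α h Ω := by
  have habs : ‖∑ n, h n * Complex.exp (Complex.I * (Ω n : ℂ))‖
      ≤ ∑ n, ‖h n‖ := by
    refine le_trans (norm_sum_le _ _) (le_of_eq ?_)
    refine Finset.sum_congr rfl fun n _ => ?_
    rw [norm_mul, Complex.norm_exp]
    simp
  have hsq : ‖∑ n, h n * Complex.exp (Complex.I * (Ω n : ℂ))‖ ^ 2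
      ≤ (∑ n, ‖h n‖) ^ 2 :=
    pow_le_pow_left₀ (norm_nonneg _) habs 2
  have hneg : -(1 / α) ≤ 0 := by
    have := le_of_lt (one_div_pos.mpr hα); linarith
  unfold fObj
  exact mul_le_mul_of_nonpos_left hsq hneg

lemma fObj_nonpos {N : ℕ} (α : ℝ) (hα : 0 < α) (h : Fin N → ℂ) (Ω : Fin N → ℝ) :
    fObj α h Ω ≤ 0 := by
  unfold fObj
  have h1 : (0:ℝ) ≤ ‖∑ n, h n * Complex.exp (Complex.I * (Ω n : ℂ))‖ ^ 2 := by
    positivity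
  nlinarith [one_div_pos.mpr hα]

/-- `F(t) = inf_Ω max( max_k (f_k(Ω) − t), max_q (g_q(Ω) − σ_q) )`. -/
noncomputable def Ffun {N K Q : ℕ} (h : Fin K → Fin N → ℂ) (α : Fin K → ℝ)
    (c : Fin Q → Fin N → ℂ) (σ : Fin Q → ℝ) (t : ℝ) : ℝ :=
  ⨅ Ω : Fin N → ℝ, max (⨆ k, (fObj (α k) (h k) Ω - t)) (⨆ q, (gObj (c q) Ω - σ q))

/-- Equivalence of the constrained min–max problem with root finding: if the feasible set
`S = {Ω : g_q(Ω) ≤ σ_q ∀q}` is nonempty and `t* = inf_{Ω ∈ S} max_k f_k(Ω)`, then `F(t*) = 0`. -/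
theorem stmt12 {N K Q : ℕ} (hN : 0 < N) (hK : 0 < K) (hQ : 0 < Q)
    (h : Fin K → Fin N → ℂ) (α : Fin K → ℝ) (hα : ∀ k, 0 < α k)
    (c : Fin Q → Fin N → ℂ) (σ : Fin Q → ℝ)
    (hfeas : ∃ Ω : Fin N → ℝ, ∀ q, gObj (c q) Ω ≤ σ q) :
    Ffun h α c σ
      (⨅ Ω : {Ω : Fin N → ℝ // ∀ q, gObj (c q) Ω ≤ σ q},
        ⨆ k, fObj (α k) (h k) (Ω : Fin N → ℝ)) = 0 := by
  haveI : Nonempty (Fin K) := Fin.pos_iff_nonempty.mp hK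
  haveI : Nonempty (Fin Q) := Fin.pos_iff_nonempty.mp hQ
  haveI hSne : Nonempty {Ω : Fin N → ℝ // ∀ q, gObj (c q) Ω ≤ σ q} :=
    ⟨⟨hfeas.choose, hfeas.choose_spec⟩⟩
  set k0 : Fin K := ⟨0, hK⟩
  set L : ℝ := -(1 / α k0) * (∑ n, ‖h k0 n‖) ^ 2 with hL
  -- supremum over k of fObj is between L and 0, for any Ω
  have hsupf_lb : ∀ Ω : Fin N → ℝ, L ≤ ⨆ k, fObj (α k) (h k) Ω := by
    intro Ω
    refine le_trans (fObj_lower _ (hα k0) _ Ω) ?_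
    exact le_ciSup (f := fun k => fObj (α k) (h k) Ω) (Set.finite_range _).bddAbove k0
  set tstar : ℝ := ⨅ Ω : {Ω : Fin N → ℝ // ∀ q, gObj (c q) Ω ≤ σ q},
      ⨆ k, fObj (α k) (h k) (Ω : Fin N → ℝ) with htstar
  have hbddS : BddBelow (Set.range fun Ω : {Ω : Fin N → ℝ // ∀ q, gObj (c q) Ω ≤ σ q} =>
      ⨆ k, fObj (α k) (h k) (Ω : Fin N → ℝ)) :=
    ⟨L, by rintro x ⟨Ω, rfl⟩; exact hsupf_lb Ω⟩
  -- inner max function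
  set G : (Fin N → ℝ) → ℝ := fun Ω =>
    max (⨆ k, (fObj (α k) (h k) Ω - tstar)) (⨆ q, (gObj (c q) Ω - σ q)) with hG
  have hGlb : ∀ Ω, L - tstar ≤ G Ω := by
    intro Ω
    refine le_trans ?_ (le_max_left _ _)
    refine le_trans ?_ (le_ciSup (Set.finite_range _).bddAbove k0)
    have := fObj_lower (α k0) (hα k0) (h k0) Ω
    simp only [hL]; linarith
  have hGbdd : BddBelow (Set.range G) := ⟨L - tstar, by rintro x ⟨Ω, rfl⟩; exact hGlb Ω⟩
  have hF : Ffun h α c σ tstar = ⨅ Ω, G Ω := rfl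
  rw [hF]
  refine le_antisymm ?_ ?_
  · -- ≤ 0 : for each ε > 0 find feasible Ω with G Ω ≤ ε
    refine le_of_forall_pos_le_add fun ε hε => ?_
    have hlt : tstar < tstar + ε := by linarith
    obtain ⟨⟨Ω, hΩfeas⟩, hΩ⟩ := exists_lt_of_ciInf_lt (htstar ▸ hlt)
    have h1 : (⨆ k, (fObj (α k) (h k) Ω - tstar)) ≤ ε := by
      refine ciSup_le fun k => ?_
      have : fObj (α k) (h k) Ω ≤ ⨆ k, fObj (α k) (h k) Ω :=
        le_ciSup (f := fun k => fObj (α k) (h k) Ω) (Set.finite_range _).bddAbove k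
      linarith
    have h2 : (⨆ q, (gObj (c q) Ω - σ q)) ≤ ε := by
      refine ciSup_le fun q => ?_
      have := hΩfeas q; linarith
    calc ⨅ Ω, G Ω ≤ G Ω := ciInf_le hGbdd Ω
      _ ≤ ε := max_le h1 h2
      _ = 0 + ε := by ring
  · -- ≥ 0 : pointwise
    refine le_ciInf fun Ω => ?_
    by_cases hfe : ∀ q, gObj (c q) Ω ≤ σ q
    · -- feasible: tstar ≤ sup f
      have h1 : tstar ≤ ⨆ k, fObj (α k) (h k) Ω := ciInf_le hbddS ⟨Ω, hfe⟩
      obtain ⟨k1, hk1⟩ := ciSup_attained fun k => fObj (α k) (h k) Ω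
      refine le_trans ?_ (le_max_left _ _)
      refine le_trans ?_ (le_ciSup (Set.finite_range _).bddAbove k1)
      rw [hk1] at h1; linarith
    · push_neg at hfe
      obtain ⟨q, hq⟩ := hfe
      refine le_trans ?_ (le_max_right _ _)
      refine le_trans ?_ (le_ciSup (Set.finite_range _).bddAbove q)
      linarith
end
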